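/- Let M be a connected simple matroid of rank 3 on a finite ground set E, and let M' be a connected matroid on E whose every base is a base of M. Suppose A ⊆ E is a flat of M' with r_{M'}(A) = 2, and let B ⊆ E be a nonempty set disjoint from A. Then every connected component C of the graph g(B,A) satisfies r_{M'}(C) = 1. -/

import Mathlib

open Set Matroid

namespace PaperWMO

variable {α : Type*}

/-- The rank of a set `X` in a matroid `M`: the size of a largest independent subset of `X`. -/
noncomputable def rk (M : Matroid α) (X : Set α) : ℕ :=
  sSup {n : ℕ | ∃ I, M.Indep I ∧ I ⊆ X ∧ I.ncard = n}

/-- Contraction of the set `C` in the matroid `M`, defined by duality: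
`M / C = (M✶ \ C)✶`, where deletion is restriction to the complement. -/
noncomputable def contract (M : Matroid α) (C : Set α) : Matroid α :=
  (M✶ ↾ (M.E \ C))✶

/-- A matroid is connected if its ground set is nonempty and it is not the direct sum of
two matroids on nonempty disjoint ground sets. -/
def Conn (M : Matroid α) : Prop :=
  M.E.Nonempty ∧ ¬ ∃ (M₁ M₂ : Matroid α) (h : Disjoint M₁.E M₂.E),
    M₁.E.Nonempty ∧ M₂.E.Nonempty ∧ M = Matroid.disjointSum M₁ M₂ h

/-- A flat of `M`: a subset `F` of the ground set such that any superset
`B` with `F ⊆ B ⊆ M.E` of the same rank equals `F`. -/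
def IsFlat (M : Matroid α) (F : Set α) : Prop :=
  F ⊆ M.E ∧ ∀ B : Set α, F ⊆ B → B ⊆ M.E → rk M B = rk M F → B = F

/-- A matroid is simple if every subset of the ground set with at most two elements
is independent. -/
def IsSimple (M : Matroid α) : Prop :=
  ∀ X ⊆ M.E, X.ncard ≤ 2 → M.Indep X

/-- A facet-defining flat of rank 2: a flat `F` of rank 2 such that
both the restriction `M ↾ F` and the contraction `M / F` are connected. -/
def FacetFlat2 (M : Matroid α) (F : Set α) : Prop :=
  IsFlat M F ∧ rk M F = 2 ∧ Conn (M ↾ F) ∧ Conn (contract M F)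

/-- `M` is 2-decomposable by the hyperplane `(A, a)_=`. -/
def TwoDecomposableBy (M : Matroid α) (A : Set α) (a : ℕ) : Prop :=
  (∃ N₁ : Matroid α, N₁.E = M.E ∧
      ∀ B : Set α, N₁.IsBase B ↔ M.IsBase B ∧ (B ∩ A).ncard ≤ a) ∧
  (∃ N₂ : Matroid α, N₂.E = M.E ∧
      ∀ B : Set α, N₂.IsBase B ↔ M.IsBase B ∧ a ≤ (B ∩ A).ncard) ∧
  (∃ B : Set α, M.IsBase B ∧ a < (B ∩ A).ncard) ∧
  (∃ B : Set α, M.IsBase B ∧ (B ∩ A).ncard < a)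

/-- A 3-partition in `M`: a partition of the ground set into three parts, each of size
at least two, such that no facet-defining flat of rank 2 meets all three parts, and the
union of any two parts has rank 3. -/
def ThreePartition (M : Matroid α) (A₁ A₂ A₃ : Set α) : Prop :=
  A₁ ∪ A₂ ∪ A₃ = M.E ∧
  Disjoint A₁ A₂ ∧ Disjoint A₂ A₃ ∧ Disjoint A₁ A₃ ∧
  2 ≤ A₁.ncard ∧ 2 ≤ A₂.ncard ∧ 2 ≤ A₃.ncard ∧
  (¬ ∃ F : Set α, FacetFlat2 M F ∧
      (F ∩ A₁).Nonempty ∧ (F ∩ A₂).Nonempty ∧ (F ∩ A₃).Nonempty) ∧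
  rk M (A₁ ∪ A₂) = 3 ∧ rk M (A₂ ∪ A₃) = 3 ∧ rk M (A₃ ∪ A₁) = 3

/-- The adjacency relation of the graph `g(A, B)` (with respect to the matroid `M`):
the vertex set is `B`, and distinct `x, y ∈ B` are adjacent iff some facet-defining flat
of rank 2 of `M` contains both `x` and `y` and meets `A`. -/
def gAdj (M : Matroid α) (A B : Set α) (x y : α) : Prop :=
  x ∈ B ∧ y ∈ B ∧ x ≠ y ∧
    ∃ F : Set α, FacetFlat2 M F ∧ x ∈ F ∧ y ∈ F ∧ (F ∩ A).Nonempty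

/-- `C` is the vertex set of a connected component of the graph `g(S, V)`. -/
def IsGComponent (M : Matroid α) (S V C : Set α) : Prop :=
  ∃ x ∈ V, C = {y | y ∈ V ∧ Relation.ReflTransGen (gAdj M S V) x y}

section Aux

variable {M : Matroid α} {X Y I J : Set α}

lemma rk_set_bddAbove (hfin : M.E.Finite) (X : Set α) :
    BddAbove {n : ℕ | ∃ I, M.Indep I ∧ I ⊆ X ∧ I.ncard = n} := by
  refine ⟨M.E.ncard, ?_⟩
  rintro n ⟨I, hI, -, rfl⟩
  exact Set.ncard_le_ncard hI.subset_ground hfin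

lemma rk_set_nonempty (M : Matroid α) (X : Set α) :
    {n : ℕ | ∃ I, M.Indep I ∧ I ⊆ X ∧ I.ncard = n}.Nonempty :=
  ⟨0, ∅, M.empty_indep, empty_subset _, Set.ncard_empty _⟩

lemma ncard_le_rk (hfin : M.E.Finite) (hI : M.Indep I) (hIX : I ⊆ X) :
    I.ncard ≤ rk M X :=
  le_csSup (rk_set_bddAbove hfin X) ⟨I, hI, hIX, rfl⟩

lemma exists_rk_set (hfin : M.E.Finite) (X : Set α) :
    ∃ I, M.Indep I ∧ I ⊆ X ∧ I.ncard = rk M X :=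
  Nat.sSup_mem (rk_set_nonempty M X) (rk_set_bddAbove hfin X)

lemma rk_mono (hfin : M.E.Finite) (hXY : X ⊆ Y) : rk M X ≤ rk M Y :=
  csSup_le_csSup (rk_set_bddAbove hfin Y) (rk_set_nonempty M X)
    (by rintro n ⟨I, hI, hIX, rfl⟩; exact ⟨I, hI, hIX.trans hXY, rfl⟩)

lemma basis_rk (hfin : M.E.Finite) (hX : X ⊆ M.E) (hJ : M.IsBasis J X) :
    rk M X = J.ncard := by
  refine le_antisymm ?_ (ncard_le_rk hfin hJ.indep hJ.subset)
  obtain ⟨I, hI, hIX, hcard⟩ := exists_rk_set hfin X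
  obtain ⟨I', hII', hI'⟩ := hI.subset_isBasis_of_subset hIX hX
  rw [← hcard, ← (hII'.restrict_isBase.ncard_eq_ncard_of_isBase hJ.restrict_isBase)]
  exact Set.ncard_le_ncard hI' (hfin.subset hII'.indep.subset_ground)

lemma rk_eq_of_subset_closure (hfin : M.E.Finite) (hX : X ⊆ M.E) (hXY : X ⊆ Y)
    (hYX : Y ⊆ M.closure X) : rk M Y = rk M X := by
  obtain ⟨J, hJ⟩ := M.exists_isBasis X hX
  have hJY : M.IsBasis J Y :=
    hJ.isBasis_closure_right.isBasis_subset (hJ.subset.trans hXY) hYX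
  rw [basis_rk hfin (hYX.trans (M.closure_subset_ground X)) hJY, basis_rk hfin hX hJ]

/-- A connected matroid whose ground set is not a singleton has no loops. -/
lemma conn_nonloop (hconn : Conn M) (hbig : ∀ e : α, (M.E \ {e}).Nonempty)
    {e : α} (he : e ∈ M.E) : M.Indep {e} := by
  by_contra hdep
  refine hconn.2 ⟨M ↾ ({e} : Set α), M ↾ (M.E \ {e}),
    by simpa using Set.disjoint_sdiff_right, by simp, by simpa using hbig e, ?_⟩
  have hunion : ({e} : Set α) ∪ (M.E \ {e}) = M.E :=
    Set.union_diff_cancel (by simpa using he)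
  refine Matroid.ext_indep (hunion.symm.trans (Matroid.disjointSum_ground_eq (M := M ↾ {e}) (N := M ↾ (M.E \ {e}))).symm) ?_
  intro I hIE
  refine Iff.trans ?_ (Matroid.disjointSum_indep_iff ..).symm
  simp only [Matroid.restrict_indep_iff, Matroid.restrict_ground_eq]
  constructor
  · intro hI
    have heI : e ∉ I := fun heI => hdep (hI.subset (by simpa using heI))
    have h1 : I ∩ ({e} : Set α) = ∅ := Set.inter_singleton_eq_empty.mpr heI
    have hIsub : I ⊆ M.E \ {e} := Set.subset_diff_singleton hIE heI
    have h2 : I ∩ (M.E \ {e}) = I := Set.inter_eq_self_of_subset_left hIsub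
    refine ⟨⟨by simp [h1], by simp [h1]⟩, ⟨by rwa [h2], by rw [h2]; exact hIsub⟩, ?_⟩
    rw [hunion]; exact hIE
  · rintro ⟨⟨h1i, h1s⟩, ⟨h2i, h2s⟩, -⟩
    have heI : e ∉ I := by
      intro heI
      have : I ∩ ({e} : Set α) = {e} := by
        apply Set.eq_singleton_iff_unique_mem.mpr
        exact ⟨⟨heI, rfl⟩, fun x hx => hx.2⟩
      rw [this] at h1i
      exact hdep h1i
    have hIsub : I ⊆ M.E \ {e} := Set.subset_diff_singleton hIE heI
    rwa [Set.inter_eq_self_of_subset_left hIsub] at h2i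

end Aux

/-- If `A` is a rank-2 flat of an included matroid `M'` and `B` is a nonempty set
disjoint from `A`, then every connected component of the graph `g(B,A)` has rank 1
in `M'`. -/
theorem component_rank_one (M M' : Matroid α) (hfin : M.E.Finite)
    (hconn : Conn M) (hsimple : IsSimple M) (hrank : rk M M.E = 3)
    (hE : M'.E = M.E) (hconn' : Conn M')
    (hsub : ∀ B : Set α, M'.IsBase B → M.IsBase B)
    (A : Set α) (hflat : IsFlat M' A) (hrA : rk M' A = 2)
    (B : Set α) (hBne : B.Nonempty) (hBE : B ⊆ M.E) (hdisj : Disjoint A B)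
    (C : Set α) (hC : IsGComponent M B A C) :
    rk M' C = 1 := by
  have hfin' : M'.E.Finite := by rw [hE]; exact hfin
  have hAE : A ⊆ M'.E := hflat.1
  -- every base of M has exactly 3 elements
  have hbase3M : ∀ B₁ : Set α, M.IsBase B₁ → B₁.ncard = 3 := by
    obtain ⟨I, hI, hIE, hIc⟩ := exists_rk_set hfin M.E
    rw [hrank] at hIc
    obtain ⟨B₀, hB₀, hIB₀⟩ := hI.exists_isBase_superset
    have hle : B₀.ncard ≤ 3 := by
      rw [← hrank]; exact ncard_le_rk hfin hB₀.indep hB₀.subset_ground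
    have hge : 3 ≤ B₀.ncard := by
      rw [← hIc]; exact Set.ncard_le_ncard hIB₀ (hfin.subset hB₀.subset_ground)
    intro B₁ hB₁
    rw [hB₁.ncard_eq_ncard_of_isBase hB₀]
    omega
  -- every independent set of M' with 3 elements is a base of M'
  have hM'base3 : ∀ I : Set α, M'.Indep I → I.ncard = 3 → M'.IsBase I := by
    intro I hI hIc
    obtain ⟨B₀, hB₀, hIB₀⟩ := hI.exists_isBase_superset
    have hB₀c : B₀.ncard = 3 := hbase3M _ (hsub _ hB₀)
    have : I = B₀ :=
      Set.eq_of_subset_of_ncard_le hIB₀ (by omega) (hfin'.subset hB₀.subset_ground)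
    rwa [this]
  -- A contains two distinct elements; hence M'.E minus any point is nonempty
  obtain ⟨I₂, hI₂, hI₂A, hI₂c⟩ := exists_rk_set hfin' A
  rw [hrA] at hI₂c
  obtain ⟨p, q, hpq, rfl⟩ := Set.ncard_eq_two.mp hI₂c
  have hpA : p ∈ A := hI₂A (by simp)
  have hqA : q ∈ A := hI₂A (by simp)
  have hbig : ∀ e : α, (M'.E \ {e}).Nonempty := by
    intro e
    rcases eq_or_ne p e with rfl | hne
    · exact ⟨q, hAE hqA, by simpa using hpq.symm⟩
    · exact ⟨p, hAE hpA, by simpa using hne⟩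
  have hnl : ∀ x ∈ M'.E, M'.Indep {x} := fun x hx => conn_nonloop hconn' hbig hx
  -- adjacent vertices: z lies in the M'-closure of {y}
  have key : ∀ y z : α, gAdj M B A y z → z ∈ M'.closure {y} := by
    rintro y z ⟨hyA, hzA, hyz, F, hF, hyF, hzF, b, hbF, hbB⟩
    have hyE : y ∈ M'.E := hAE hyA
    have hzE : z ∈ M'.E := hAE hzA
    have hbE : b ∈ M'.E := by rw [hE]; exact hF.1.1 hbF
    have hbA : b ∉ A := fun h => Set.disjoint_left.mp hdisj h hbB
    have hzy : z ∉ ({y} : Set α) := by simpa using hyz.symm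
    by_contra hzcl
    have hyzI : M'.Indep (insert z ({y} : Set α)) :=
      ((hnl y hyE).insert_indep_iff_of_notMem hzy).mpr ⟨hzE, hzcl⟩
    have hbni : b ∉ insert z ({y} : Set α) := by
      intro h
      rcases h with h | h
      · exact hbA (h ▸ hzA)
      · exact hbA ((Set.mem_singleton_iff.mp h) ▸ hyA)
    by_cases hbI : M'.Indep (insert b (insert z ({y} : Set α)))
    · have hcard : (insert b (insert z ({y} : Set α))).ncard = 3 := by
        rw [Set.ncard_insert_of_notMem hbni, Set.ncard_insert_of_notMem hzy,
          Set.ncard_singleton]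
      have hMB : M.IsBase (insert b (insert z ({y} : Set α))) := hsub _ (hM'base3 _ hbI hcard)
      have hsubF : insert b (insert z ({y} : Set α)) ⊆ F :=
        Set.insert_subset hbF (Set.insert_subset hzF (Set.singleton_subset_iff.mpr hyF))
      have h3 : (3 : ℕ) ≤ rk M F := by
        rw [← hcard]; exact ncard_le_rk hfin hMB.indep hsubF
      rw [hF.2.1] at h3
      omega
    · have hbcl : b ∈ M'.closure (insert z ({y} : Set α)) := by
        by_contra hc
        exact hbI ((hyzI.insert_indep_iff_of_notMem hbni).mpr ⟨hbE, hc⟩)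
      have hsubA : insert z ({y} : Set α) ⊆ A :=
        Set.insert_subset hzA (Set.singleton_subset_iff.mpr hyA)
      have hbclA : b ∈ M'.closure A := M'.closure_subset_closure hsubA hbcl
      have hrkeq : rk M' (A ∪ {b}) = rk M' A :=
        rk_eq_of_subset_closure hfin' hAE Set.subset_union_left
          (Set.union_subset (M'.subset_closure A hAE) (by simpa using hbclA))
      have hAb : A ∪ {b} = A :=
        hflat.2 (A ∪ {b}) Set.subset_union_left
          (Set.union_subset hAE (by simpa using hbE)) hrkeq
      exact hbA (hAb ▸ Set.mem_union_right A (Set.mem_singleton b))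
  -- unpack the component
  obtain ⟨x, hxA, rfl⟩ := hC
  have hxE : x ∈ M'.E := hAE hxA
  have hxI : M'.Indep {x} := hnl x hxE
  have hCcl : ∀ y : α, Relation.ReflTransGen (gAdj M B A) x y → y ∈ M'.closure {x} := by
    intro y hrel
    induction hrel with
    | refl => exact M'.subset_closure {x} (by simpa using hxE) (Set.mem_singleton x)
    | tail hr hadj ih =>
      rename_i m c
      have hcm : c ∈ M'.closure {m} := key m c hadj
      have : M'.closure {m} ⊆ M'.closure {x} :=
        Matroid.closure_subset_closure_of_subset_closure (by simpa using ih)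
      exact this hcm
  have hCsub : {y | y ∈ A ∧ Relation.ReflTransGen (gAdj M B A) x y} ⊆ M'.closure {x} :=
    fun y hy => hCcl y hy.2
  have hxC : x ∈ {y | y ∈ A ∧ Relation.ReflTransGen (gAdj M B A) x y} :=
    ⟨hxA, Relation.ReflTransGen.refl⟩
  have hrkx : rk M' {x} = 1 := by
    refine le_antisymm ?_ ?_
    · obtain ⟨I, hI, hIX, hIc⟩ := exists_rk_set hfin' {x}
      rw [← hIc]
      simpa using Set.ncard_le_ncard hIX (Set.finite_singleton x)
    · simpa using ncard_le_rk hfin' hxI (subset_refl {x})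
  refine le_antisymm ?_ ?_
  · calc rk M' {y | y ∈ A ∧ Relation.ReflTransGen (gAdj M B A) x y}
        ≤ rk M' (M'.closure {x}) := rk_mono hfin' hCsub
      _ = rk M' {x} :=
          rk_eq_of_subset_closure hfin' (by simpa using hxE)
            (M'.subset_closure {x} (by simpa using hxE)) (subset_refl _)
      _ = 1 := hrkx
  · have := ncard_le_rk hfin' hxI (Set.singleton_subset_iff.mpr hxC)
    simpa using this

end PaperWMO
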